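/- Let q > 1 be a real number and let α_1, …, α_s and β_1, …, β_t be complex numbers, all of absolute value √q, such that {β_1, …, β_t} is a sub-multiset of {α_1, …, α_s} and for every integer n ≥ 1 the real number Σ_{i=1}^s Re(α_i^n) − Σ_{j=1}^t Re(β_j^n) is ≤ 0. Then s = t (so the two multisets coincide). -/

import Mathlib

open Real Finset

lemma re_pow_eq (z : ℂ) (n : ℕ) :
    (z ^ n).re = ‖z‖ ^ n * Real.cos (n * Complex.arg z) := by
  conv_lhs => rw [← Complex.norm_mul_exp_arg_mul_I z]
  rw [mul_pow, ← Complex.exp_nat_mul]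
  have : (n : ℂ) * (↑z.arg * Complex.I) = (↑(n * z.arg : ℝ)) * Complex.I := by
    push_cast; ring
  rw [this, Complex.exp_mul_I]
  simp only [Complex.add_re, Complex.mul_re, Complex.I_re, Complex.I_im,
    ← Complex.ofReal_pow, Complex.ofReal_re, Complex.ofReal_im,
    Complex.cos_ofReal_re, Complex.cos_ofReal_im, Complex.sin_ofReal_im,
    Complex.sin_ofReal_re]
  ring

lemma cos_two_pi_mul_pos_of_near_int (x : ℝ) (m : ℤ) (h : |x - m| < 1/5) :
    0 < Real.cos (2 * π * x) := by
  have : 2 * π * x = 2 * π * (x - m) + m * (2 * π) := by ring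
  rw [this, Real.cos_add_int_mul_two_pi]
  apply Real.cos_pos_of_mem_Ioo
  have hπ := Real.pi_pos
  constructor
  · nlinarith [abs_lt.mp h]
  · nlinarith [abs_lt.mp h]

lemma exists_cos_pos (K : ℕ) (θ : Fin K → ℝ) :
    ∃ n : ℕ, 1 ≤ n ∧ ∀ e, 0 < Real.cos (n * θ e) := by
  set t : Fin K → ℝ := fun e => θ e / (2 * π) with ht
  have hπ := Real.pi_pos
  set F : Fin (5 ^ K + 1) → (Fin K → Fin 5) := fun n e =>
    ⟨(⌊(5 : ℝ) * Int.fract ((n : ℝ) * t e)⌋).toNat, by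
      have h1 : (5:ℝ) * Int.fract ((n : ℝ) * t e) < 5 := by
        nlinarith [Int.fract_lt_one ((n : ℝ) * t e)]
      have h2 : ⌊(5:ℝ) * Int.fract ((n : ℝ) * t e)⌋ < 5 :=
        Int.floor_lt.mpr (by exact_mod_cast h1)
      omega⟩ with hF
  have hcard : Fintype.card (Fin K → Fin 5) < Fintype.card (Fin (5 ^ K + 1)) := by
    simp
  obtain ⟨a, b, hab, hFab⟩ := Fintype.exists_ne_map_eq_of_card_lt F hcard
  -- wlog a < b
  wlog hlt : (a : ℕ) < (b : ℕ) generalizing a b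
  · have hne' : (a : ℕ) ≠ (b : ℕ) := Fin.val_ne_of_ne hab
    exact this b a hab.symm hFab.symm (by omega)
  refine ⟨(b : ℕ) - (a : ℕ), by omega, fun e => ?_⟩
  -- the fractional parts are close
  have hfloor : ⌊(5:ℝ) * Int.fract ((a : ℝ) * t e)⌋ = ⌊(5:ℝ) * Int.fract ((b : ℝ) * t e)⌋ := by
    have := congrFun hFab e
    simp only [hF, Fin.mk.injEq] at this
    have h1 : (0:ℤ) ≤ ⌊(5:ℝ) * Int.fract ((a : ℝ) * t e)⌋ :=
      Int.floor_nonneg.mpr (mul_nonneg (by norm_num) (Int.fract_nonneg _))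
    have h2 : (0:ℤ) ≤ ⌊(5:ℝ) * Int.fract ((b : ℝ) * t e)⌋ :=
      Int.floor_nonneg.mpr (mul_nonneg (by norm_num) (Int.fract_nonneg _))
    omega
  have hclose : |Int.fract ((b : ℝ) * t e) - Int.fract ((a : ℝ) * t e)| < 1/5 := by
    set x := Int.fract ((a : ℝ) * t e)
    set y := Int.fract ((b : ℝ) * t e)
    have hx1 := Int.floor_le ((5:ℝ) * x)
    have hx2 := Int.lt_floor_add_one ((5:ℝ) * x)
    have hy1 := Int.floor_le ((5:ℝ) * y)
    have hy2 := Int.lt_floor_add_one ((5:ℝ) * y)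
    have hc : ((⌊(5:ℝ) * x⌋ : ℤ) : ℝ) = ((⌊(5:ℝ) * y⌋ : ℤ) : ℝ) := by exact_mod_cast hfloor
    rw [abs_lt]
    constructor <;> linarith
  -- n * t e is close to an integer
  set m : ℤ := ⌊(b : ℝ) * t e⌋ - ⌊(a : ℝ) * t e⌋
  have hnear : |(((b : ℕ) - (a : ℕ) : ℕ) : ℝ) * t e - m| < 1/5 := by
    have hcast : (((b : ℕ) - (a : ℕ) : ℕ) : ℝ) = (b : ℝ) - (a : ℝ) := by
      push_cast [Nat.cast_sub hlt.le]; simp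
    have ha := Int.self_sub_floor ((a : ℝ) * t e)
    have hb := Int.self_sub_floor ((b : ℝ) * t e)
    have : (((b : ℕ) - (a : ℕ) : ℕ) : ℝ) * t e - m =
        Int.fract ((b : ℝ) * t e) - Int.fract ((a : ℝ) * t e) := by
      rw [hcast]
      push_cast [m]
      rw [← ha, ← hb]; ring
    rw [this]; exact hclose
  have hθ : θ e = 2 * π * t e := by
    simp only [ht]
    field_simp [hπ.ne']
  rw [hθ]
  have : (↑((b : ℕ) - (a : ℕ)) : ℝ) * (2 * π * t e) =
      2 * π * ((↑((b : ℕ) - (a : ℕ)) : ℝ) * t e) := by ring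
  rw [this]
  exact cos_two_pi_mul_pos_of_near_int _ m hnear

theorem eigenvalue_multiset_comparison (q : ℝ) (hq : 1 < q) (s t : ℕ)
    (α : Fin s → ℂ) (β : Fin t → ℂ)
    (hα : ∀ i, ‖α i‖ = Real.sqrt q)
    (hβ : ∀ j, ‖β j‖ = Real.sqrt q)
    (hsub : ∃ ι : Fin t → Fin s, Function.Injective ι ∧ ∀ j, β j = α (ι j))
    (h : ∀ n : ℕ, 1 ≤ n →
      (∑ i, ((α i) ^ n).re) - (∑ j, ((β j) ^ n).re) ≤ 0) :
    s = t := by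
  obtain ⟨ι, hinj, hβα⟩ := hsub
  have hts : t ≤ s := by
    simpa using Fintype.card_le_of_injective ι hinj
  by_contra hne
  have hlt : t < s := lt_of_le_of_ne hts (Ne.symm hne)
  set S : Finset (Fin s) := Finset.univ.image ι with hS
  have hScard : S.card = t := by
    rw [hS, Finset.card_image_of_injective _ hinj, Finset.card_univ, Fintype.card_fin]
  have hcompl : (Finset.univ \ S).Nonempty := by
    rw [Finset.sdiff_nonempty]
    intro hsub'
    have := Finset.card_le_card hsub'
    simp [hScard, Finset.card_univ] at this
    omega
  obtain ⟨n, hn1, hcos⟩ := exists_cos_pos s (fun i => Complex.arg (α i))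
  have hpos : ∀ i : Fin s, 0 < ((α i) ^ n).re := by
    intro i
    rw [re_pow_eq]
    have habs : 0 < ‖α i‖ := by
      rw [hα i]; exact Real.sqrt_pos.mpr (by linarith)
    exact mul_pos (pow_pos habs n) (hcos i)
  have hsumβ : (∑ j, ((β j) ^ n).re) = ∑ i ∈ S, ((α i) ^ n).re := by
    rw [hS, Finset.sum_image (fun a _ b _ hab => hinj hab)]
    exact Finset.sum_congr rfl fun j _ => by rw [hβα j]
  have hsplit : (∑ i, ((α i) ^ n).re) =
      (∑ i ∈ Finset.univ \ S, ((α i) ^ n).re) + ∑ i ∈ S, ((α i) ^ n).re := by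
    rw [Finset.sum_sdiff (Finset.subset_univ S)]
  have hgt : 0 < ∑ i ∈ Finset.univ \ S, ((α i) ^ n).re :=
    Finset.sum_pos (fun i _ => hpos i) hcompl
  have := h n hn1
  rw [hsplit, hsumβ] at this
  linarith
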